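/- Fix linear forms u_i(x,y) = a_i x + b_i y for i = 1,…,k with a_i b_j − a_j b_i ≠ 0 for i ≠ j, and let v_i = b_i ∂_x − a_i ∂_y be the associated (pairwise commuting) vector fields. For a germ of holomorphic function g of one variable and a submersion u, g(u) can be written as Σ_{i=1}^k g_i(u_i) for suitable germs g_i if and only if v₁v₂⋯v_k( g(u) ) = 0. -/

import Mathlib

open Filter
open scoped ENNReal NNReal

/-- Partial derivative with respect to the first variable. -/
noncomputable def pdx (F : ℂ × ℂ → ℂ) (p : ℂ × ℂ) : ℂ :=
  deriv (fun z => F (z, p.2)) p.1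

/-- Partial derivative with respect to the second variable. -/
noncomputable def pdy (F : ℂ × ℂ → ℂ) (p : ℂ × ℂ) : ℂ :=
  deriv (fun z => F (p.1, z)) p.2




/-- Global chain rule for affine pre-composition, valid without differentiability. -/
lemma deriv_comp_affine (h : ℂ → ℂ) (a c x : ℂ) :
    deriv (fun z => h (a * z + c)) x = a * deriv h (a * x + c) := by
  rcases eq_or_ne a 0 with rfl | ha
  · simp
  by_cases hd : DifferentiableAt ℂ h (a * x + c)
  · have hin : DifferentiableAt ℂ (fun z : ℂ => a * z + c) x :=
      (differentiableAt_id.const_mul a).add_const c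
    have key := deriv_comp (h₂ := h) (h := fun z : ℂ => a * z + c) x hd hin
    simp only [Function.comp_def] at key
    rw [key]
    have : deriv (fun z : ℂ => a * z + c) x = a := by
      rw [deriv_add_const, deriv_const_mul _ differentiableAt_id, deriv_id'']; ring
    rw [this]; ring
  · have h1 : ¬ DifferentiableAt ℂ (fun z => h (a * z + c)) x := by
      intro hdd
      apply hd
      have hh : h = fun w => (fun z => h (a * z + c)) ((w - c) / a) := by
        funext w; field_simp; rw [sub_add_cancel]
      have hin : DifferentiableAt ℂ (fun w : ℂ => (w - c) / a) (a * x + c) := by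
        fun_prop
      have hval : ((fun w : ℂ => (w - c) / a) (a * x + c)) = x := by field_simp; ring
      have hdd' : DifferentiableAt ℂ (fun z => h (a * z + c))
          ((fun w : ℂ => (w - c) / a) (a * x + c)) := by rw [hval]; exact hdd
      have hcomp : DifferentiableAt ℂ ((fun z => h (a * z + c)) ∘ (fun w : ℂ => (w - c) / a))
          (a * x + c) := DifferentiableAt.comp _ hdd' hin
      have heq : ((fun z => h (a * z + c)) ∘ (fun w : ℂ => (w - c) / a)) = h := by
        funext w
        have : a * ((w - c) / a) + c = w := by field_simp; ring
        simp [Function.comp_def, this]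
      exact heq ▸ hcomp
    rw [deriv_zero_of_not_differentiableAt hd, deriv_zero_of_not_differentiableAt h1, mul_zero]

lemma pdx_eq {F : ℂ × ℂ → ℂ} {q : ℂ × ℂ} (hF : DifferentiableAt ℂ F q) :
    pdx F q = fderiv ℂ F q (1, 0) := by
  have hin : HasDerivAt (fun z : ℂ => (z, q.2)) ((1 : ℂ), (0 : ℂ)) q.1 :=
    (hasDerivAt_id q.1).prodMk (hasDerivAt_const q.1 q.2)
  have hF' : HasFDerivAt F (fderiv ℂ F q) ((fun z : ℂ => (z, q.2)) q.1) := by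
    simpa using hF.hasFDerivAt
  exact ((hF'.comp_hasDerivAt q.1 hin)).deriv

lemma pdy_eq {F : ℂ × ℂ → ℂ} {q : ℂ × ℂ} (hF : DifferentiableAt ℂ F q) :
    pdy F q = fderiv ℂ F q (0, 1) := by
  have hin : HasDerivAt (fun z : ℂ => (q.1, z)) ((0 : ℂ), (1 : ℂ)) q.2 :=
    (hasDerivAt_const q.2 q.1).prodMk (hasDerivAt_id q.2)
  have hF' : HasFDerivAt F (fderiv ℂ F q) ((fun z : ℂ => (q.1, z)) q.2) := by
    simpa using hF.hasFDerivAt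
  exact ((hF'.comp_hasDerivAt q.2 hin)).deriv





noncomputable def DD (A B : ℂ) (F : ℂ × ℂ → ℂ) : ℂ × ℂ → ℂ :=
  fun q => B * pdx F q - A * pdy F q

lemma sliceX_diff {F : ℂ × ℂ → ℂ} {q : ℂ × ℂ} (hF : DifferentiableAt ℂ F q) :
    DifferentiableAt ℂ (fun z => F (z, q.2)) q.1 := by
  have h2 : DifferentiableAt ℂ (fun z : ℂ => ((z, q.2) : ℂ × ℂ)) q.1 := by fun_prop
  have h1 : DifferentiableAt ℂ F ((fun z : ℂ => ((z, q.2) : ℂ × ℂ)) q.1) := by simpa using hF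
  simpa [Function.comp_def] using DifferentiableAt.comp q.1 h1 h2

lemma sliceY_diff {F : ℂ × ℂ → ℂ} {q : ℂ × ℂ} (hF : DifferentiableAt ℂ F q) :
    DifferentiableAt ℂ (fun z => F (q.1, z)) q.2 := by
  have h2 : DifferentiableAt ℂ (fun z : ℂ => ((q.1, z) : ℂ × ℂ)) q.2 := by fun_prop
  have h1 : DifferentiableAt ℂ F ((fun z : ℂ => ((q.1, z) : ℂ × ℂ)) q.2) := by simpa using hF
  simpa [Function.comp_def] using DifferentiableAt.comp q.2 h1 h2

lemma DD_eq_fderiv {F : ℂ × ℂ → ℂ} {q : ℂ × ℂ} (hF : DifferentiableAt ℂ F q) (A B : ℂ) :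
    DD A B F q = fderiv ℂ F q (B, -A) := by
  have hv : ((B, -A) : ℂ × ℂ) = B • ((1 : ℂ), (0 : ℂ)) + (-A) • ((0 : ℂ), (1 : ℂ)) := by
    simp [Prod.ext_iff]
  rw [DD, pdx_eq hF, pdy_eq hF, hv, map_add, map_smul, map_smul]
  simp only [smul_eq_mul]
  ring

lemma DD_congr {F F' : ℂ × ℂ → ℂ} (h : F =ᶠ[nhds (0 : ℂ × ℂ)] F') (A B : ℂ) :
    DD A B F =ᶠ[nhds (0 : ℂ × ℂ)] DD A B F' := by
  obtain ⟨U, hUP, hUopen, hU0⟩ := eventually_nhds_iff.1 h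
  filter_upwards [hUopen.mem_nhds hU0] with q hq
  have hmemx : U ∈ nhds ((fun z : ℂ => ((z, q.2) : ℂ × ℂ)) q.1) := hUopen.mem_nhds (by simpa using hq)
  have hmemy : U ∈ nhds ((fun z : ℂ => ((q.1, z) : ℂ × ℂ)) q.2) := hUopen.mem_nhds (by simpa using hq)
  have hx : pdx F q = pdx F' q := by
    apply Filter.EventuallyEq.deriv_eq
    have hcont : ContinuousAt (fun z : ℂ => ((z, q.2) : ℂ × ℂ)) q.1 := by fun_prop
    filter_upwards [hcont.preimage_mem_nhds hmemx] with z hz using hUP _ hz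
  have hy : pdy F q = pdy F' q := by
    apply Filter.EventuallyEq.deriv_eq
    have hcont : ContinuousAt (fun z : ℂ => ((q.1, z) : ℂ × ℂ)) q.2 := by fun_prop
    filter_upwards [hcont.preimage_mem_nhds hmemy] with z hz using hUP _ hz
  simp [DD, hx, hy]

lemma DD_analytic {F : ℂ × ℂ → ℂ} (hF : ∀ᶠ q in nhds (0 : ℂ × ℂ), AnalyticAt ℂ F q) (A B : ℂ) :
    ∀ᶠ q in nhds (0 : ℂ × ℂ), AnalyticAt ℂ (DD A B F) q := by
  obtain ⟨U, hUP, hUopen, hU0⟩ := eventually_nhds_iff.1 hF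
  filter_upwards [hUopen.mem_nhds hU0] with q hq
  have h1 : AnalyticAt ℂ (fderiv ℂ F) q := (hUP q hq).fderiv
  have hfd : AnalyticAt ℂ (fun p => fderiv ℂ F p ((B, -A) : ℂ × ℂ)) q := by
    have hT := (ContinuousLinearMap.apply ℂ ℂ ((B, -A) : ℂ × ℂ)).analyticAt (fderiv ℂ F q)
    simpa [Function.comp_def] using hT.comp h1
  apply hfd.congr
  have hev : ∀ᶠ p in nhds q, DD A B F p = fderiv ℂ F p ((B, -A) : ℂ × ℂ) := by
    filter_upwards [hUopen.mem_nhds hq] with p hp using DD_eq_fderiv (hUP p hp).differentiableAt A B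
  exact hev.mono fun p hp => hp.symm

lemma DD_sub {F F' : ℂ × ℂ → ℂ} (hF : ∀ᶠ q in nhds (0 : ℂ × ℂ), AnalyticAt ℂ F q)
    (hF' : ∀ᶠ q in nhds (0 : ℂ × ℂ), AnalyticAt ℂ F' q) (A B : ℂ) :
    DD A B (fun q => F q - F' q) =ᶠ[nhds (0 : ℂ × ℂ)] fun q => DD A B F q - DD A B F' q := by
  filter_upwards [hF, hF'] with q hq hq'
  have hx : pdx (fun p => F p - F' p) q = pdx F q - pdx F' q := by
    simp only [pdx]
    exact deriv_sub (sliceX_diff hq.differentiableAt) (sliceX_diff hq'.differentiableAt)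
  have hy : pdy (fun p => F p - F' p) q = pdy F q - pdy F' q := by
    simp only [pdy]
    exact deriv_sub (sliceY_diff hq.differentiableAt) (sliceY_diff hq'.differentiableAt)
  simp only [DD, hx, hy]
  ring

lemma DD_sum {m : ℕ} {F : Fin m → ℂ × ℂ → ℂ}
    (hF : ∀ i, ∀ᶠ q in nhds (0 : ℂ × ℂ), AnalyticAt ℂ (F i) q) (A B : ℂ) :
    DD A B (fun p => ∑ i, F i p) =ᶠ[nhds (0 : ℂ × ℂ)] fun p => ∑ i, DD A B (F i) p := by
  filter_upwards [eventually_all.2 hF] with q hq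
  have hx : pdx (fun p => ∑ i, F i p) q = ∑ i, pdx (F i) q := by
    simp only [pdx]
    exact deriv_fun_sum fun i _ => sliceX_diff (hq i).differentiableAt
  have hy : pdy (fun p => ∑ i, F i p) q = ∑ i, pdy (F i) q := by
    simp only [pdy]
    exact deriv_fun_sum fun i _ => sliceY_diff (hq i).differentiableAt
  simp only [DD, hx, hy, Finset.mul_sum, ← Finset.sum_sub_distrib]

lemma DD_const_mul_comp_linear (A B ai bi C : ℂ) (h : ℂ → ℂ) :
    DD A B (fun p => C * h (ai * p.1 + bi * p.2)) =
      fun q => (B * ai - A * bi) * (C * deriv h (ai * q.1 + bi * q.2)) := by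
  funext q
  have hx : pdx (fun p => C * h (ai * p.1 + bi * p.2)) q
      = C * (ai * deriv h (ai * q.1 + bi * q.2)) := by
    simp only [pdx]
    rw [deriv_const_mul_field, deriv_comp_affine]
  have hy : pdy (fun p => C * h (ai * p.1 + bi * p.2)) q
      = C * (bi * deriv h (ai * q.1 + bi * q.2)) := by
    simp only [pdy]
    rw [deriv_const_mul_field]
    have harg : (fun z => h (ai * q.1 + bi * z)) = fun z => h (bi * z + ai * q.1) := by
      funext z; rw [add_comm]
    rw [harg, deriv_comp_affine, add_comm (bi * q.2)]
  simp only [DD, hx, hy]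
  ring

section Foldr
variable {ι : Type*} (A B : ι → ℂ)

lemma foldr_congr {F F' : ℂ × ℂ → ℂ} (h : F =ᶠ[nhds (0 : ℂ × ℂ)] F') (L : List ι) :
    L.foldr (fun i F => DD (A i) (B i) F) F =ᶠ[nhds (0 : ℂ × ℂ)]
      L.foldr (fun i F => DD (A i) (B i) F) F' := by
  induction L with
  | nil => exact h
  | cons j L ih => exact DD_congr ih (A j) (B j)

lemma foldr_analytic {F : ℂ × ℂ → ℂ} (hF : ∀ᶠ q in nhds (0 : ℂ × ℂ), AnalyticAt ℂ F q)
    (L : List ι) :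
    ∀ᶠ q in nhds (0 : ℂ × ℂ), AnalyticAt ℂ (L.foldr (fun i F => DD (A i) (B i) F) F) q := by
  induction L with
  | nil => exact hF
  | cons j L ih => exact DD_analytic ih (A j) (B j)

lemma foldr_sub {F F' : ℂ × ℂ → ℂ} (hF : ∀ᶠ q in nhds (0 : ℂ × ℂ), AnalyticAt ℂ F q)
    (hF' : ∀ᶠ q in nhds (0 : ℂ × ℂ), AnalyticAt ℂ F' q) (L : List ι) :
    L.foldr (fun i F => DD (A i) (B i) F) (fun q => F q - F' q) =ᶠ[nhds (0 : ℂ × ℂ)]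
      fun q => L.foldr (fun i F => DD (A i) (B i) F) F q
        - L.foldr (fun i F => DD (A i) (B i) F) F' q := by
  induction L with
  | nil => rfl
  | cons j L ih =>
    refine (DD_congr ih (A j) (B j)).trans ?_
    exact DD_sub (foldr_analytic A B hF L) (foldr_analytic A B hF' L) (A j) (B j)

lemma foldr_sum {m : ℕ} {F : Fin m → ℂ × ℂ → ℂ}
    (hF : ∀ i, ∀ᶠ q in nhds (0 : ℂ × ℂ), AnalyticAt ℂ (F i) q) (L : List ι) :
    L.foldr (fun i F => DD (A i) (B i) F) (fun p => ∑ i, F i p) =ᶠ[nhds (0 : ℂ × ℂ)]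
      fun p => ∑ i, L.foldr (fun i F => DD (A i) (B i) F) (F i) p := by
  induction L with
  | nil => rfl
  | cons j L ih =>
    refine (DD_congr ih (A j) (B j)).trans ?_
    exact DD_sum (fun i => foldr_analytic A B (hF i) L) (A j) (B j)

lemma foldr_comp_linear (ai bi : ℂ) (h : ℂ → ℂ) (L : List ι) :
    L.foldr (fun i F => DD (A i) (B i) F) (fun p => h (ai * p.1 + bi * p.2)) =
      fun q => ((L.map fun i => B i * ai - A i * bi).prod)
        * (deriv^[L.length] h (ai * q.1 + bi * q.2)) := by
  induction L with
  | nil => funext q; simp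
  | cons j L ih =>
    rw [List.foldr_cons, ih, DD_const_mul_comp_linear]
    funext q
    rw [← Function.iterate_succ_apply' deriv]
    simp only [List.map_cons, List.prod_cons, List.length_cons]
    ring

end Foldr

lemma exists_primitive {h : ℂ → ℂ} (hh : AnalyticAt ℂ h 0) :
    ∃ H : ℂ → ℂ, AnalyticAt ℂ H 0 ∧ deriv H =ᶠ[nhds (0 : ℂ)] h := by
  obtain ⟨p, hp⟩ := hh
  obtain ⟨r, hr⟩ := id hp
  obtain ⟨r', hr'0, hr'lt⟩ := ENNReal.lt_iff_exists_nnreal_btwn.1 hr.r_pos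
  have hr'pos : 0 < (r' : ℝ) := by exact_mod_cast ENNReal.coe_pos.1 hr'0
  have hrad : (r' : ℝ≥0∞) < p.radius := lt_of_lt_of_le hr'lt hr.r_le
  set c : ℕ → ℂ := fun n => p.coeff n with hc
  have hsum' : Summable fun n => ‖c n‖ * (r' : ℝ) ^ n := by
    simpa [hc, FormalMultilinearSeries.norm_apply_eq_norm_coef] using
      p.summable_norm_mul_pow hrad
  set g : ℕ → ℂ → ℂ := fun n z => (c n / (n + 1)) * z ^ (n + 1) with hgdef
  set g' : ℕ → ℂ → ℂ := fun n z => c n * z ^ n with hg'def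
  have hg : ∀ n, ∀ y ∈ Metric.ball (0 : ℂ) r', HasDerivAt (g n) (g' n y) y := by
    intro n y _
    have hne : ((n : ℂ) + 1) ≠ 0 := Nat.cast_add_one_ne_zero n
    have h1 := (hasDerivAt_pow (n + 1) y).const_mul (c n / ((n : ℂ) + 1))
    refine h1.congr_deriv ?_
    simp only [hg'def, Nat.add_sub_cancel, Nat.cast_add, Nat.cast_one]
    field_simp
  have hbound : ∀ n, ∀ y ∈ Metric.ball (0 : ℂ) r', ‖g' n y‖ ≤ ‖c n‖ * (r' : ℝ) ^ n := by
    intro n y hy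
    have hyr : ‖y‖ ≤ (r' : ℝ) := le_of_lt (by simpa [Metric.mem_ball] using hy)
    calc ‖c n * y ^ n‖ = ‖c n‖ * ‖y‖ ^ n := by simp
    _ ≤ ‖c n‖ * (r' : ℝ) ^ n :=
        mul_le_mul_of_nonneg_left (pow_le_pow_left₀ (norm_nonneg y) hyr n) (norm_nonneg _)
  have hball : (0 : ℂ) ∈ Metric.ball (0 : ℂ) r' := by simpa using hr'pos
  have hg0 : Summable fun n => g n 0 := by
    have : (fun n => g n 0) = fun _ => (0 : ℂ) := by
      funext n; simp [hgdef]
    rw [this]; exact summable_zero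
  set H : ℂ → ℂ := fun z => ∑' n, g n z with hH
  have hHd : ∀ y ∈ Metric.ball (0 : ℂ) r', HasDerivAt H (∑' n, g' n y) y := fun y hy =>
    hasDerivAt_tsum_of_isPreconnected hsum' Metric.isOpen_ball
      (convex_ball (0 : ℂ) (r' : ℝ)).isPreconnected hg hbound hball hg0 hy
  have hHan : AnalyticAt ℂ H 0 := by
    apply DifferentiableOn.analyticAt (s := Metric.ball (0 : ℂ) r')
    · exact fun y hy => ((hHd y hy).differentiableAt).differentiableWithinAt
    · exact Metric.ball_mem_nhds _ hr'pos
  refine ⟨H, hHan, ?_⟩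
  have hhs := hasFPowerSeriesAt_iff.1 hp
  filter_upwards [hhs, Metric.ball_mem_nhds (0 : ℂ) hr'pos] with z hz hzball
  rw [(hHd z hzball).deriv]
  have hsz : HasSum (fun n => g' n z) (h z) := by
    have : (fun n => g' n z) = fun n => z ^ n • p.coeff n := by
      funext n; simp [hg'def, hc, smul_eq_mul, mul_comm]
    rw [this]
    simpa using hz
  exact hsz.tsum_eq

lemma exists_iterated_primitive (n : ℕ) :
    ∀ {h : ℂ → ℂ}, AnalyticAt ℂ h 0 →
    ∃ H : ℂ → ℂ, AnalyticAt ℂ H 0 ∧ deriv^[n] H =ᶠ[nhds (0 : ℂ)] h := by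
  induction n with
  | zero => exact fun hh => ⟨_, hh, Filter.EventuallyEq.rfl⟩
  | succ n ih =>
    intro h hh
    obtain ⟨H1, hH1, hd1⟩ := exists_primitive hh
    obtain ⟨H, hH, hdn⟩ := ih hH1
    refine ⟨H, hH, ?_⟩
    have h1 : deriv^[n + 1] H = deriv (deriv^[n] H) := Function.iterate_succ_apply' deriv n H
    rw [h1]
    exact (hdn.deriv).trans hd1



lemma const_dir (a b : ℂ) (hab : ¬(a = 0 ∧ b = 0)) {F : ℂ × ℂ → ℂ} (hF : AnalyticAt ℂ F 0)
    (hz : ∀ᶠ q in nhds (0 : ℂ × ℂ), b * pdx F q - a * pdy F q = 0) :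
    ∃ h : ℂ → ℂ, AnalyticAt ℂ h 0 ∧
      ∀ᶠ p in nhds (0 : ℂ × ℂ), F p = h (a * p.1 + b * p.2) := by
  obtain ⟨cc, dd, hcd⟩ : ∃ cc dd : ℂ, a * cc + b * dd = 1 := by
    by_cases ha : a = 0
    · have hb : b ≠ 0 := fun hb => hab ⟨ha, hb⟩
      exact ⟨0, b⁻¹, by field_simp [ha]; ring⟩
    · exact ⟨a⁻¹, 0, by field_simp; ring⟩
  set h : ℂ → ℂ := fun t => F (t * cc, t * dd) with hhdef
  have hlin : AnalyticAt ℂ (fun t : ℂ => ((t * cc, t * dd) : ℂ × ℂ)) 0 :=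
    (analyticAt_id.mul analyticAt_const).prod (analyticAt_id.mul analyticAt_const)
  have hhan : AnalyticAt ℂ h 0 := by
    have h0 : ((fun t : ℂ => ((t * cc, t * dd) : ℂ × ℂ)) 0) = (0 : ℂ × ℂ) := by simp
    have hF' : AnalyticAt ℂ F ((fun t : ℂ => ((t * cc, t * dd) : ℂ × ℂ)) 0) := by
      rw [h0]; exact hF
    simpa [Function.comp_def, hhdef] using AnalyticAt.comp (g := F) (f := fun t : ℂ => ((t * cc, t * dd) : ℂ × ℂ)) (x := 0) hF' hlin
  obtain ⟨r, hrpos, hrball⟩ :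
      ∃ r > 0, ∀ q ∈ Metric.ball (0 : ℂ × ℂ) r,
        AnalyticAt ℂ F q ∧ b * pdx F q - a * pdy F q = 0 :=
    Metric.eventually_nhds_iff_ball.1 (hF.eventually_analyticAt.and hz)
  have hdir : ∀ q ∈ Metric.ball (0 : ℂ × ℂ) r, fderiv ℂ F q ((b, -a) : ℂ × ℂ) = 0 := by
    intro q hq
    obtain ⟨hqa, hqz⟩ := hrball q hq
    have hdF := hqa.differentiableAt
    have hv : ((b, -a) : ℂ × ℂ) = b • ((1 : ℂ), (0 : ℂ)) + (-a) • ((0 : ℂ), (1 : ℂ)) := by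
      simp [Prod.ext_iff]
    rw [hv, map_add, map_smul, map_smul, smul_eq_mul, smul_eq_mul, ← pdx_eq hdF, ← pdy_eq hdF]
    linear_combination hqz
  set C : ℝ := (‖a‖ + ‖b‖) * (‖cc‖ + ‖dd‖) with hC
  have hC0 : 0 ≤ C := by positivity
  set ε : ℝ := r / (C + 1) with hε
  have hεpos : 0 < ε := by positivity
  have hεr : ε ≤ r := by
    rw [hε]; exact div_le_self hrpos.le (by linarith)
  refine ⟨h, hhan, ?_⟩
  filter_upwards [Metric.ball_mem_nhds (0 : ℂ × ℂ) hεpos] with p hp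
  have hpnorm : ‖p‖ < ε := by simpa [Metric.mem_ball] using hp
  set t : ℂ := a * p.1 + b * p.2 with htdef
  have ht : ‖t‖ ≤ (‖a‖ + ‖b‖) * ‖p‖ := by
    calc ‖a * p.1 + b * p.2‖ ≤ ‖a * p.1‖ + ‖b * p.2‖ := norm_add_le _ _
    _ = ‖a‖ * ‖p.1‖ + ‖b‖ * ‖p.2‖ := by simp
    _ ≤ ‖a‖ * ‖p‖ + ‖b‖ * ‖p‖ := by
        gcongr
        exacts [norm_fst_le p, norm_snd_le p]
    _ = (‖a‖ + ‖b‖) * ‖p‖ := by ring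
  set LL : ℂ → ℂ × ℂ := fun s => (t * cc + s * b, t * dd - s * a) with hLL
  set S : Set ℂ := LL ⁻¹' Metric.ball (0 : ℂ × ℂ) r with hS
  have hLLcont : Continuous LL := by fun_prop
  have hSopen : IsOpen S := Metric.isOpen_ball.preimage hLLcont
  have hSconv : Convex ℝ S := by
    intro s1 h1 s2 h2 α β hα hβ hαβ
    have hαβ' : (α : ℂ) + (β : ℂ) = 1 := by exact_mod_cast hαβ
    have hkey : LL (α • s1 + β • s2) = α • LL s1 + β • LL s2 := by
      simp only [hLL, Prod.smul_mk, Prod.mk_add_mk, Complex.real_smul, smul_eq_mul]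
      rw [Prod.mk.injEq]
      constructor
      · linear_combination t * cc * hαβ'.symm
      · linear_combination t * dd * hαβ'.symm
    show LL (α • s1 + β • s2) ∈ Metric.ball (0 : ℂ × ℂ) r
    rw [hkey]
    exact convex_ball (0 : ℂ × ℂ) r h1 h2 hα hβ hαβ
  have hψ : ∀ s ∈ S, HasDerivAt (fun s => F (LL s)) 0 s := by
    intro s hs
    have hqa := (hrball (LL s) hs).1.differentiableAt
    have hin1 : HasDerivAt (fun s : ℂ => t * cc + s * b) (1 * b) s :=
      ((hasDerivAt_id s).mul_const b).const_add (t * cc)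
    have hin2 : HasDerivAt (fun s : ℂ => t * dd - s * a) (-(1 * a)) s :=
      ((hasDerivAt_id s).mul_const a).const_sub (t * dd)
    have hinner : HasDerivAt LL ((b, -a) : ℂ × ℂ) s := by
      have := hin1.prodMk hin2
      simpa using this
    have hcomp := hqa.hasFDerivAt.comp_hasDerivAt s hinner
    have := hdir (LL s) hs
    rw [this] at hcomp
    simpa [Function.comp_def] using hcomp
  have hdiffOn : DifferentiableOn ℂ (fun s => F (LL s)) S :=
    fun s hs => ((hψ s hs).differentiableAt).differentiableWithinAt
  have hfw : ∀ s ∈ S, fderivWithin ℂ (fun s => F (LL s)) S s = 0 := by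
    intro s hs
    rw [fderivWithin_of_isOpen hSopen hs, ((hψ s hs).hasFDerivAt).fderiv]
    ext
    simp
  set sp : ℂ := dd * p.1 - cc * p.2 with hsp
  have hLLsp : LL sp = p := by
    simp only [hLL, hsp, htdef]
    have h1 : (a * p.1 + b * p.2) * cc + (dd * p.1 - cc * p.2) * b = p.1 := by
      linear_combination p.1 * hcd
    have h2 : (a * p.1 + b * p.2) * dd - (dd * p.1 - cc * p.2) * a = p.2 := by
      linear_combination p.2 * hcd
    rw [h1, h2]
  have h0S : (0 : ℂ) ∈ S := by
    show LL 0 ∈ Metric.ball (0 : ℂ × ℂ) r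
    have hLL0 : LL 0 = (t * cc, t * dd) := by simp [hLL]
    rw [hLL0, mem_ball_zero_iff]
    have : ‖((t * cc, t * dd) : ℂ × ℂ)‖ ≤ ‖t‖ * (‖cc‖ + ‖dd‖) := by
      rw [Prod.norm_def]
      apply max_le
      · simp only [norm_mul]
        have := norm_nonneg dd
        nlinarith [norm_nonneg t, norm_nonneg cc]
      · simp only [norm_mul]
        nlinarith [norm_nonneg t, norm_nonneg cc, norm_nonneg dd]
    calc ‖((t * cc, t * dd) : ℂ × ℂ)‖ ≤ ‖t‖ * (‖cc‖ + ‖dd‖) := this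
    _ ≤ (‖a‖ + ‖b‖) * ‖p‖ * (‖cc‖ + ‖dd‖) := by
        have hcdpos : (0:ℝ) ≤ ‖cc‖ + ‖dd‖ := by positivity
        nlinarith [norm_nonneg p]
    _ = C * ‖p‖ := by rw [hC]; ring
    _ ≤ C * ε := by nlinarith [norm_nonneg p]
    _ < (C + 1) * ε := by nlinarith
    _ = r := by rw [hε]; field_simp
  have hspS : sp ∈ S := by
    show LL sp ∈ Metric.ball (0 : ℂ × ℂ) r
    rw [hLLsp, mem_ball_zero_iff]
    exact lt_of_lt_of_le hpnorm hεr
  have hconst := hSconv.is_const_of_fderivWithin_eq_zero hdiffOn hfw hspS h0S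
  have hψsp : F (LL sp) = F p := by rw [hLLsp]
  have hψ0 : F (LL 0) = h t := by
    have hLL0 : LL 0 = (t * cc, t * dd) := by simp [hLL]
    rw [hLL0]
  rw [← hψsp, ← hψ0]
  exact hconst

lemma tendsto_lin (ai bi : ℂ) :
    Filter.Tendsto (fun q : ℂ × ℂ => ai * q.1 + bi * q.2) (nhds 0) (nhds 0) := by
  have hc : Continuous fun q : ℂ × ℂ => ai * q.1 + bi * q.2 := by fun_prop
  have h00 : (fun q : ℂ × ℂ => ai * q.1 + bi * q.2) (0 : ℂ × ℂ) = 0 := by simp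
  simpa [h00] using hc.tendsto (0 : ℂ × ℂ)

lemma evAn_comp_linear {h : ℂ → ℂ} (hh : AnalyticAt ℂ h 0) (ai bi : ℂ) :
    ∀ᶠ q in nhds (0 : ℂ × ℂ), AnalyticAt ℂ (fun p : ℂ × ℂ => h (ai * p.1 + bi * p.2)) q := by
  have hℓ : ∀ q : ℂ × ℂ, AnalyticAt ℂ (fun p : ℂ × ℂ => ai * p.1 + bi * p.2) q := fun q =>
    (analyticAt_const.mul analyticAt_fst).add (analyticAt_const.mul analyticAt_snd)
  filter_upwards [(tendsto_lin ai bi).eventually hh.eventually_analyticAt] with q hq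
  simpa [Function.comp_def] using
    AnalyticAt.comp (g := h) (f := fun p : ℂ × ℂ => ai * p.1 + bi * p.2) (x := q) hq (hℓ q)

lemma auxBack (n : ℕ) : ∀ (A B : Fin n → ℂ),
    (∀ i, ¬(A i = 0 ∧ B i = 0)) →
    (∀ i j, i ≠ j → A i * B j - A j * B i ≠ 0) →
    ∀ G : ℂ × ℂ → ℂ, AnalyticAt ℂ G 0 →
    ((List.finRange n).foldr (fun i F => DD (A i) (B i) F) G =ᶠ[nhds (0 : ℂ × ℂ)] 0) →
    ∃ gs : Fin n → ℂ → ℂ, (∀ i, AnalyticAt ℂ (gs i) 0) ∧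
      G =ᶠ[nhds (0 : ℂ × ℂ)] fun p => ∑ i, gs i (A i * p.1 + B i * p.2) := by
  induction n with
  | zero =>
    intro A B _ _ G _ hfold
    refine ⟨fun _ => 0, fun _ => analyticAt_const, ?_⟩
    filter_upwards [hfold] with q hq
    simpa using hq
  | succ n ih =>
    intro A B hne hpair G hG hfold
    have hfold2 : DD (A 0) (B 0)
        ((List.finRange n).foldr (fun i (F : ℂ × ℂ → ℂ) => DD (A i.succ) (B i.succ) F) G)
        =ᶠ[nhds (0 : ℂ × ℂ)] 0 := by
      simpa [List.finRange_succ, List.foldr_map] using hfold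
    set K := (List.finRange n).foldr (fun i (F : ℂ × ℂ → ℂ) => DD (A i.succ) (B i.succ) F) G
      with hKdef
    have hKan : ∀ᶠ q in nhds (0 : ℂ × ℂ), AnalyticAt ℂ K q :=
      foldr_analytic (fun i : Fin n => A i.succ) (fun i : Fin n => B i.succ) hG.eventually_analyticAt _
    have hK0 : AnalyticAt ℂ K 0 := hKan.self_of_nhds
    have hz : ∀ᶠ q in nhds (0 : ℂ × ℂ), B 0 * pdx K q - A 0 * pdy K q = 0 := by
      filter_upwards [hfold2] with q hq
      simpa [DD] using hq
    obtain ⟨h, hhan, hKh⟩ := const_dir (A 0) (B 0) (hne 0) hK0 hz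
    set c : ℂ := ((List.finRange n).map (fun i : Fin n => B i.succ * A 0 - A i.succ * B 0)).prod
      with hc
    have hcne : c ≠ 0 := by
      apply List.prod_ne_zero
      intro h0
      obtain ⟨i, _, hi⟩ := List.mem_map.1 h0
      exact hpair i.succ 0 (Fin.succ_ne_zero i) (by linear_combination -hi)
    obtain ⟨H, hHan, hHd⟩ := exists_iterated_primitive n
      (analyticAt_const.mul hhan : AnalyticAt ℂ (fun t => c⁻¹ * h t) 0)
    have hHℓan : ∀ᶠ q in nhds (0 : ℂ × ℂ),
        AnalyticAt ℂ (fun p : ℂ × ℂ => H (A 0 * p.1 + B 0 * p.2)) q :=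
      evAn_comp_linear hHan (A 0) (B 0)
    have hfold' : (List.finRange n).foldr (fun i (F : ℂ × ℂ → ℂ) => DD (A i.succ) (B i.succ) F)
        (fun q => G q - H (A 0 * q.1 + B 0 * q.2)) =ᶠ[nhds (0 : ℂ × ℂ)] 0 := by
      have h1 := foldr_sub (fun i : Fin n => A i.succ) (fun i => B i.succ)
        hG.eventually_analyticAt hHℓan (List.finRange n)
      have h2 : (List.finRange n).foldr (fun i (F : ℂ × ℂ → ℂ) => DD (A i.succ) (B i.succ) F)
          (fun p => H (A 0 * p.1 + B 0 * p.2))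
          = fun q => c * deriv^[n] H (A 0 * q.1 + B 0 * q.2) := by
        have := foldr_comp_linear (fun i : Fin n => A i.succ) (fun i => B i.succ)
          (A 0) (B 0) H (List.finRange n)
        simpa [List.length_finRange, hc] using this
      have h3 : ∀ᶠ q in nhds (0 : ℂ × ℂ),
          c * deriv^[n] H (A 0 * q.1 + B 0 * q.2) = h (A 0 * q.1 + B 0 * q.2) := by
        filter_upwards [(tendsto_lin (A 0) (B 0)).eventually hHd] with q hq
        rw [hq]; simp only [Pi.mul_apply]; rw [← mul_assoc, mul_inv_cancel₀ hcne, one_mul]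
      refine h1.trans ?_
      rw [h2]
      filter_upwards [hKh, h3] with q hq1 hq2
      simp only [hq2, Pi.zero_apply]
      rw [← hKdef, hq1, sub_self]
    obtain ⟨gs', hgs'an, hgs'⟩ := ih (fun i : Fin n => A i.succ) (fun i : Fin n => B i.succ)
      (fun i => hne i.succ)
      (fun i j hij => hpair i.succ j.succ ((Fin.succ_injective n).ne hij))
      (fun q => G q - H (A 0 * q.1 + B 0 * q.2))
      (hG.sub (hHℓan.self_of_nhds)) hfold'
    refine ⟨Fin.cases H gs', ?_, ?_⟩
    · intro i
      induction i using Fin.cases with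
      | zero => simpa using hHan
      | succ j => simpa using hgs'an j
    · have hstep : G =ᶠ[nhds (0 : ℂ × ℂ)]
          fun p => H (A 0 * p.1 + B 0 * p.2)
            + ∑ i, gs' i (A i.succ * p.1 + B i.succ * p.2) := by
        filter_upwards [hgs'] with q hq
        have hGq : G q = (G q - H (A 0 * q.1 + B 0 * q.2)) + H (A 0 * q.1 + B 0 * q.2) := by
          ring
        rw [hGq, hq]
        ring
      have heq : (fun p : ℂ × ℂ => H (A 0 * p.1 + B 0 * p.2)
            + ∑ i, gs' i (A i.succ * p.1 + B i.succ * p.2))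
          = fun p => ∑ i : Fin (n + 1), Fin.cases H gs' i (A i * p.1 + B i * p.2) := by
        funext p
        rw [Fin.sum_univ_succ]
        simp
      exact heq ▸ hstep

/-- Fix linear forms `u i (x,y) = a i · x + b i · y`, `i = 1,…,k`, with
`a i · b j - a j · b i ≠ 0` for `i ≠ j`, and let `v i = b i · ∂x - a i · ∂y` be the
associated pairwise commuting (Hamiltonian) vector fields.  Let `u` be a germ of
holomorphic submersion at `0 ∈ ℂ²` with `u(0) = 0` and `v i (u) ≠ 0` for all `i`, and let
`g` be a germ of holomorphic function of one variable.  Then `g ∘ u` can be written as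
`∑ i, g_i ∘ u_i` near the origin, for suitable analytic germs `g_i`, if and only if
`v₁ v₂ ⋯ v_k ( g ∘ u ) = 0` identically near the origin. -/
theorem stmt_17 (k : ℕ) (a b : Fin k → ℂ)
    (hpair : ∀ i j, i ≠ j → a i * b j - a j * b i ≠ 0)
    (u : ℂ × ℂ → ℂ) (hu : AnalyticAt ℂ u 0) (hu0 : u 0 = 0)
    (husub : ∀ i, b i * pdx u 0 - a i * pdy u 0 ≠ 0)
    (g : ℂ → ℂ) (hg : AnalyticAt ℂ g 0) :
    (∃ gs : Fin k → (ℂ → ℂ), (∀ i, AnalyticAt ℂ (gs i) 0) ∧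
        ∀ᶠ p in nhds (0 : ℂ × ℂ), g (u p) = ∑ i, gs i (a i * p.1 + b i * p.2)) ↔
      (∀ᶠ p in nhds (0 : ℂ × ℂ),
        (List.finRange k).foldr
          (fun i F => fun q => b i * pdx F q - a i * pdy F q)
          (fun q => g (u q)) p = 0) := by
  have hop : (fun (i : Fin k) (F : ℂ × ℂ → ℂ) => fun q => b i * pdx F q - a i * pdy F q)
      = fun i F => DD (a i) (b i) F := rfl
  rw [hop]
  constructor
  · rintro ⟨gs, hgsan, hsum⟩
    have hG : (fun p : ℂ × ℂ => g (u p)) =ᶠ[nhds (0 : ℂ × ℂ)]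
        fun p => ∑ i, gs i (a i * p.1 + b i * p.2) := hsum
    have hterm : ∀ i : Fin k,
        (List.finRange k).foldr (fun i (F : ℂ × ℂ → ℂ) => DD (a i) (b i) F)
          (fun p => gs i (a i * p.1 + b i * p.2)) = fun _ => (0 : ℂ) := by
      intro i
      rw [foldr_comp_linear]
      funext q
      have hzero : ((List.finRange k).map fun j => b j * a i - a j * b i).prod = 0 := by
        apply List.prod_eq_zero
        exact List.mem_map.2 ⟨i, List.mem_finRange i, by ring⟩
      rw [hzero, zero_mul]
    have hsumfold := foldr_sum a b
      (F := fun i (p : ℂ × ℂ) => gs i (a i * p.1 + b i * p.2))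
      (fun i => evAn_comp_linear (hgsan i) (a i) (b i)) (List.finRange k)
    have hchain := (foldr_congr a b hG (List.finRange k)).trans hsumfold
    filter_upwards [hchain] with p hp
    rw [hp]
    simp only [hterm]
    simp
  · intro hfold
    have hGan : AnalyticAt ℂ (fun p : ℂ × ℂ => g (u p)) 0 := by
      have hg' : AnalyticAt ℂ g (u 0) := by rw [hu0]; exact hg
      simpa [Function.comp_def] using
        AnalyticAt.comp (g := g) (f := u) (x := (0 : ℂ × ℂ)) hg' hu
    have hne : ∀ i, ¬(a i = 0 ∧ b i = 0) := by
      intro i hcon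
      exact husub i (by rw [hcon.1, hcon.2]; ring)
    obtain ⟨gs, h1, h2⟩ := auxBack k a b hne hpair (fun p => g (u p)) hGan hfold
    exact ⟨gs, h1, h2⟩
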